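/- Let I = {x_{j₁},…,x_{j_d}} be a maximal stable set of a connected graph G on n vertices and set ℓ′ = Σᵢ e_{jᵢ} ∈ ℝⁿ. Then the cone ℝ₊B is contained in the halfspace {w ∈ ℝ^{n+1} : w · (−ℓ′, 1) ≥ 0}, and the set {(e_{j₁},1),…,(e_{j_d},1)} ∪ {(v,1) : v characteristic vector of an edge meeting I in exactly one vertex} contains n linearly independent vectors lying on the hyperplane {w : w · (−ℓ′,1) = 0}. -/

import Mathlib

open NNReal

/-- A subset `F` of vertices is a stable (independent) set of `G` if it contains no edge. -/
def IsStableSet {V : Type*} (G : SimpleGraph V) (F : Finset V) : Prop :=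
  ∀ ⦃a b : V⦄, a ∈ F → b ∈ F → ¬ G.Adj a b

/-- The set `B = {(e₁,1),…,(e_n,1)} ∪ {(v,1) : v edge characteristic vector} ∪ {e_{n+1}}`
inside `ℝⁿ × ℝ`. -/
def graphGenSetR (n : ℕ) (G : SimpleGraph (Fin n)) : Set ((Fin n → ℝ) × ℝ) :=
  {p | ∃ i : Fin n, p = (Pi.single i 1, 1)} ∪
  {p | ∃ a b : Fin n, G.Adj a b ∧ p = (Pi.single a 1 + Pi.single b 1, 1)} ∪
  {((0 : Fin n → ℝ), 1)}

/-- For a maximal stable set `I` with `ℓ′ = Σ_{i∈I} eᵢ`, the cone `ℝ₊B` lies in the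
halfspace `{w : w·(−ℓ′,1) ≥ 0}`, and among the vectors `(eᵢ,1)` (`i ∈ I`) and `(v,1)`
(`v` the characteristic vector of an edge meeting `I` in exactly one vertex) there are
`n` linearly independent ones lying on the hyperplane `{w : w·(−ℓ′,1) = 0}`. -/
theorem maximalStable_gives_facet {n : ℕ} (G : SimpleGraph (Fin n)) (hconn : G.Connected)
    (I : Finset (Fin n)) (hstab : IsStableSet G I)
    (hmax : ∀ F : Finset (Fin n), I ⊂ F → ¬ IsStableSet G F) :
    (∀ w ∈ Submodule.span ℝ≥0 (graphGenSetR n G), ∑ i ∈ I, w.1 i ≤ w.2) ∧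
      ∃ f : Fin n → (Fin n → ℝ) × ℝ, LinearIndependent ℝ f ∧
        ∀ j : Fin n,
          ((∃ i ∈ I, f j = (Pi.single i 1, 1)) ∨
            (∃ a b : Fin n, G.Adj a b ∧ (a ∈ I ↔ b ∉ I) ∧
              f j = (Pi.single a 1 + Pi.single b 1, 1)))
          ∧ ∑ i ∈ I, (f j).1 i = (f j).2 := by
  classical
  have hnb : ∀ j : Fin n, j ∉ I → ∃ i, i ∈ I ∧ G.Adj j i := by
    intro j hj
    have h := hmax (insert j I) (Finset.ssubset_insert hj)
    unfold IsStableSet at h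
    push_neg at h
    obtain ⟨a, b, ha, hb, hab⟩ := h
    rcases Finset.mem_insert.1 ha with rfl | ha'
    · rcases Finset.mem_insert.1 hb with rfl | hb'
      · exact absurd hab (G.loopless.irrefl _)
      · exact ⟨b, hb', hab⟩
    · rcases Finset.mem_insert.1 hb with rfl | hb'
      · exact ⟨a, ha', hab.symm⟩
      · exact absurd hab (hstab ha' hb')
  choose nb hnbI hnbAdj using hnb
  constructor
  · intro w hw
    induction hw using Submodule.span_induction with
    | mem p hp =>
      rcases hp with (⟨i, rfl⟩ | ⟨a, b, hab, rfl⟩) | hp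
      · simp only [Finset.sum_pi_single']
        split_ifs <;> norm_num
      · have : ¬ (a ∈ I ∧ b ∈ I) := fun ⟨ha, hb⟩ => hstab ha hb hab
        simp only [Pi.add_apply, Finset.sum_add_distrib, Finset.sum_pi_single']
        split_ifs with h1 h2 h2 <;> simp_all <;> norm_num
      · simp only [Set.mem_singleton_iff] at hp
        subst hp
        simp
    | zero => simp
    | add x y _ _ hx hy =>
      simpa [Finset.sum_add_distrib] using add_le_add hx hy
    | smul c x _ hx =>
      have hc : (0:ℝ) ≤ (c:ℝ) := c.2
      calc ∑ i ∈ I, (c • x).1 i = (c:ℝ) * ∑ i ∈ I, x.1 i := by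
            simp [Finset.mul_sum, NNReal.smul_def]
        _ ≤ (c:ℝ) * x.2 := mul_le_mul_of_nonneg_left hx hc
        _ = (c • x).2 := by simp [NNReal.smul_def]
  · set f : Fin n → (Fin n → ℝ) × ℝ := fun j =>
      if h : j ∈ I then (Pi.single j 1, 1)
      else (Pi.single j 1 + Pi.single (nb j h) 1, 1) with hf
    refine ⟨f, ?_, ?_⟩
    · rw [Fintype.linearIndependent_iff]
      intro g hg
      have hcoord : ∀ k : Fin n,
          (∑ j : Fin n, g j * (f j).1 k) = 0 := by
        intro k
        have h := congrArg (fun p : (Fin n → ℝ) × ℝ => p.1 k) hg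
        simpa [Prod.fst_sum, Finset.sum_apply] using h
      have hout : ∀ k : Fin n, k ∉ I → g k = 0 := by
        intro k hk
        have h := hcoord k
        rw [Finset.sum_eq_single k] at h
        · have h2 : nb k hk ≠ k := fun e => hk (e ▸ hnbI k hk)
          simpa [hf, hk, Pi.single_apply, h2] using h
        · intro j _ hj
          by_cases hjI : j ∈ I
          · have : k ≠ j := fun e => hk (e ▸ hjI)
            simp [hf, hjI, Pi.single_apply, this]
          · have h1 : k ≠ j := fun e => hj e.symm
            have h2 : k ≠ nb j hjI := fun e => hk (e ▸ hnbI j hjI)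
            simp [hf, hjI, Pi.single_apply, h1, h2]
        · intro h; exact absurd (Finset.mem_univ k) h
      intro k
      by_cases hk : k ∈ I
      · have h := hcoord k
        rw [Finset.sum_eq_single k] at h
        · simpa [hf, hk, Pi.single_apply] using h
        · intro j _ hj
          by_cases hjI : j ∈ I
          · have : k ≠ j := fun e => hj e.symm
            simp [hf, hjI, Pi.single_apply, this]
          · simp [hout j hjI]
        · intro h; exact absurd (Finset.mem_univ k) h
      · exact hout k hk
    · intro j
      by_cases hj : j ∈ I
      · refine ⟨Or.inl ⟨j, hj, by simp [hf, hj]⟩, ?_⟩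
        simp [hf, hj, Finset.sum_pi_single']
      · refine ⟨Or.inr ⟨j, nb j hj, hnbAdj j hj, by simp [hj, hnbI j hj], by simp [hf, hj]⟩, ?_⟩
        simp [hf, hj, Finset.sum_add_distrib, Finset.sum_pi_single', hnbI j hj]
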